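/- Fix h > 0, Δt > 0, M ≥ 0, P > 0 with M·Δt ≤ h/(2P). Let G(b,c,d) = c - Δt·F·sqrt(1 + max(0, -(d-c)/h)^2 + max(0, (c-b)/h)^2) with 0 ≤ F ≤ M, restricted to (b,c,d) with |(d-c)/h| ≤ P and |(c-b)/h| ≤ P. Then G is nondecreasing in each of b, c, and d separately. -/

import Mathlib

set_option maxHeartbeats 1000000

private lemma sqrt_add_le' (s A : ℝ) (h1 : 1 ≤ s) (hA : 0 ≤ A) :
    Real.sqrt (s + A) ≤ Real.sqrt s + A / 2 := by
  have hs : 0 ≤ s := by linarith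
  have e1 := Real.sq_sqrt hs
  have g1 : 1 ≤ Real.sqrt s := by
    rw [show (1:ℝ) = Real.sqrt 1 by simp]
    exact Real.sqrt_le_sqrt h1
  have h2 : Real.sqrt (s + A) ≤ Real.sqrt ((Real.sqrt s + A / 2) ^ 2) := by
    apply Real.sqrt_le_sqrt
    nlinarith
  rwa [Real.sqrt_sq (by nlinarith)] at h2

/-- the full upwind numerical update
G(b,c,d) = c - Δt·F·√(1 + max(0,-(d-c)/h)² + max(0,(c-b)/h)²) is nondecreasing in
each of b, c, d separately, under the CFL condition M·Δt ≤ h/(2P) with 0 ≤ F ≤ M,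
restricted to arguments whose difference quotients are bounded by P. -/
theorem scheme_monotone_full (h Δt M P F : ℝ)
    (hh : 0 < h) (hΔt : 0 < Δt) (hM : 0 ≤ M) (hP : 0 < P)
    (hCFL : M * Δt ≤ h / (2 * P)) (hF0 : 0 ≤ F) (hFM : F ≤ M)
    (G : ℝ → ℝ → ℝ → ℝ)
    (hG : ∀ b c d, G b c d =
      c - Δt * F * Real.sqrt (1 + (max 0 (-((d - c) / h))) ^ 2
        + (max 0 ((c - b) / h)) ^ 2)) :
    (∀ b b' c d, b ≤ b' → |(d - c) / h| ≤ P → |(c - b) / h| ≤ P →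
      |(c - b') / h| ≤ P → G b c d ≤ G b' c d) ∧
    (∀ b c c' d, c ≤ c' → |(d - c) / h| ≤ P → |(c - b) / h| ≤ P →
      |(d - c') / h| ≤ P → |(c' - b) / h| ≤ P → G b c d ≤ G b c' d) ∧
    (∀ b c d d', d ≤ d' → |(d - c) / h| ≤ P → |(d' - c) / h| ≤ P →
      |(c - b) / h| ≤ P → G b c d ≤ G b c d') := by
  have hΔF : 0 ≤ Δt * F := mul_nonneg hΔt.le hF0
  refine ⟨?_, ?_, ?_⟩
  · -- monotone in b
    intro b b' c d hbb _ _ _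
    rw [hG, hG]
    have hy : (c - b') / h ≤ (c - b) / h := by
      apply div_le_div_of_nonneg_right (by linarith) hh.le
    have hmax : max 0 ((c - b') / h) ≤ max 0 ((c - b) / h) :=
      max_le_max le_rfl hy
    have hsq : (max 0 ((c - b') / h)) ^ 2 ≤ (max 0 ((c - b) / h)) ^ 2 :=
      pow_le_pow_left₀ (le_max_left _ _) hmax 2
    have hs : Real.sqrt (1 + (max 0 (-((d - c) / h))) ^ 2 + (max 0 ((c - b') / h)) ^ 2)
        ≤ Real.sqrt (1 + (max 0 (-((d - c) / h))) ^ 2 + (max 0 ((c - b) / h)) ^ 2) :=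
      Real.sqrt_le_sqrt (by linarith)
    nlinarith [mul_le_mul_of_nonneg_left hs hΔF]
  · -- monotone in c
    intro b c c' d hcc hdc hcb hdc' hc'b
    rw [hG, hG]
    set x := max 0 (-((d - c) / h)) with hxdef
    set y := max 0 ((c - b) / h) with hydef
    set x' := max 0 (-((d - c') / h)) with hx'def
    set y' := max 0 ((c' - b) / h) with hy'def
    have ht0 : 0 ≤ (c' - c) / h := div_nonneg (by linarith) hh.le
    have hx0 : 0 ≤ x := le_max_left _ _
    have hy0 : 0 ≤ y := le_max_left _ _
    have hxP : x ≤ P := max_le hP.le (by cases abs_le.mp hdc with | intro h1 h2 => linarith)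
    have hyP : y ≤ P := max_le hP.le (abs_le.mp hcb).2
    have hx'P : x' ≤ P := max_le hP.le (by cases abs_le.mp hdc' with | intro h1 h2 => linarith)
    have hy'P : y' ≤ P := max_le hP.le (abs_le.mp hc'b).2
    have hx0' : 0 ≤ x' := le_max_left _ _
    have hy0' : 0 ≤ y' := le_max_left _ _
    have hxx : x' ≤ x + (c' - c) / h := by
      apply max_le (by linarith)
      have : -((d - c') / h) = -((d - c) / h) + (c' - c) / h := by ring
      rw [this]
      exact add_le_add_left (le_max_right _ _) _
    have hyy : y' ≤ y + (c' - c) / h := by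
      apply max_le (by linarith)
      have : (c' - b) / h = (c - b) / h + (c' - c) / h := by ring
      rw [this]
      exact add_le_add_left (le_max_right _ _) _
    -- squared terms bound
    have hsqx : x' ^ 2 - x ^ 2 ≤ 2 * P * ((c' - c) / h) := by nlinarith
    have hsqy : y' ^ 2 - y ^ 2 ≤ 2 * P * ((c' - c) / h) := by nlinarith
    have hsle : 1 + x' ^ 2 + y' ^ 2 ≤ (1 + x ^ 2 + y ^ 2) + 4 * P * ((c' - c) / h) := by
      linarith
    have hkey : Real.sqrt (1 + x' ^ 2 + y' ^ 2)
        ≤ Real.sqrt (1 + x ^ 2 + y ^ 2) + (4 * P * ((c' - c) / h)) / 2 := by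
      calc Real.sqrt (1 + x' ^ 2 + y' ^ 2)
          ≤ Real.sqrt ((1 + x ^ 2 + y ^ 2) + 4 * P * ((c' - c) / h)) :=
            Real.sqrt_le_sqrt hsle
        _ ≤ _ := sqrt_add_le' _ _ (by nlinarith) (by positivity)
    -- CFL bound: Δt * F * (2 P (c'-c)/h) ≤ c' - c
    have hCFL2 : Δt * F * (2 * P * ((c' - c) / h)) ≤ c' - c := by
      have h1 : Δt * F ≤ h / (2 * P) := by
        calc Δt * F ≤ Δt * M := by nlinarith
          _ = M * Δt := by ring
          _ ≤ h / (2 * P) := hCFL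
      have h1' : Δt * F * (2 * P) ≤ h := by
        have := mul_le_mul_of_nonneg_right h1 (by positivity : (0:ℝ) ≤ 2 * P)
        rwa [div_mul_cancel₀ _ (by positivity : (2:ℝ) * P ≠ 0)] at this
      have hct : (c' - c) / h * h = c' - c := div_mul_cancel₀ _ hh.ne'
      nlinarith [mul_le_mul_of_nonneg_right h1' ht0]
    have hmul := mul_le_mul_of_nonneg_left hkey hΔF
    have hexp : Δt * F * (Real.sqrt (1 + x ^ 2 + y ^ 2) + (4 * P * ((c' - c) / h)) / 2)
        = Δt * F * Real.sqrt (1 + x ^ 2 + y ^ 2) + Δt * F * (2 * P * ((c' - c) / h)) := by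
      ring
    linarith [hmul, hCFL2, hexp]
  · -- monotone in d
    intro b c d d' hdd _ _ _
    rw [hG, hG]
    have hx : -((d' - c) / h) ≤ -((d - c) / h) := by
      have : (d - c) / h ≤ (d' - c) / h := div_le_div_of_nonneg_right (by linarith) hh.le
      linarith
    have hmax : max 0 (-((d' - c) / h)) ≤ max 0 (-((d - c) / h)) :=
      max_le_max le_rfl hx
    have hsq : (max 0 (-((d' - c) / h))) ^ 2 ≤ (max 0 (-((d - c) / h))) ^ 2 :=
      pow_le_pow_left₀ (le_max_left _ _) hmax 2
    have hs : Real.sqrt (1 + (max 0 (-((d' - c) / h))) ^ 2 + (max 0 ((c - b) / h)) ^ 2)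
        ≤ Real.sqrt (1 + (max 0 (-((d - c) / h))) ^ 2 + (max 0 ((c - b) / h)) ^ 2) :=
      Real.sqrt_le_sqrt (by linarith)
    nlinarith [mul_le_mul_of_nonneg_left hs hΔF]
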